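/- arXiv:2209.14502 — 4 statements merged into one kernel-verified Lean document; each statement's English description precedes it below -/
import Mathlib

section
/- Cross-quantile score covariance identity: let a, b : ℝ^d → ℝ be measurable functions with a(X) ≤ b(X) almost surely, and suppose E[1{y ≤ a(X)} | σ(X)] = τ₁ and E[1{y ≤ b(X)} | σ(X)] = τ₂ almost surely, where 0 < τ₁ ≤ τ₂ < 1. Then for all coordinates j, k: E[ (1{y ≤ a(X)} − τ₁)(1{y ≤ b(X)} − τ₂) X_j X_k ] = (min(τ₁, τ₂) − τ₁ τ₂) E[ X_j X_k ]. -/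
open MeasureTheory

lemma euclid_coord_abs_le_norm {d : ℕ} (x : EuclideanSpace ℝ (Fin d)) (j : Fin d) :
    |x j| ≤ ‖x‖ := by
  rw [EuclideanSpace.norm_eq]
  have h1 : |x j| = Real.sqrt (‖x j‖ ^ 2) := by
    rw [Real.sqrt_sq_eq_abs]; simp [abs_abs]
  rw [h1]
  apply Real.sqrt_le_sqrt
  exact Finset.single_le_sum (f := fun i => ‖x i‖ ^ 2) (fun i _ => by positivity)
    (Finset.mem_univ j)

/-- Cross-quantile score covariance identity.  If `a(X) ≤ b(X)` a.s.,
`E[1{y ≤ a(X)} | σ(X)] = τ₁` and `E[1{y ≤ b(X)} | σ(X)] = τ₂` a.s., with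
`0 < τ₁ ≤ τ₂ < 1`, then for all coordinates `j, k`,
`E[(1{y ≤ a(X)} − τ₁)(1{y ≤ b(X)} − τ₂) X_j X_k] = (min(τ₁,τ₂) − τ₁τ₂) E[X_j X_k]`. -/
theorem qr_cross_quantile_score_covariance {Ω : Type*} [MeasurableSpace Ω] (P : Measure Ω)
    [IsProbabilityMeasure P] (d : ℕ)
    (X : Ω → EuclideanSpace ℝ (Fin d)) (y : Ω → ℝ)
    (hX : Measurable X) (hy : Measurable y)
    (hX2 : Integrable (fun ω => ‖X ω‖ ^ 2) P)
    (a b : EuclideanSpace ℝ (Fin d) → ℝ) (ha : Measurable a) (hb : Measurable b)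
    (hab : ∀ᵐ ω ∂P, a (X ω) ≤ b (X ω))
    (τ₁ τ₂ : ℝ) (hτ₁ : 0 < τ₁) (hτ₁₂ : τ₁ ≤ τ₂) (hτ₂ : τ₂ < 1)
    (hcond₁ : P[(fun ω => if y ω ≤ a (X ω) then (1 : ℝ) else 0) |
        MeasurableSpace.comap X inferInstance] =ᵐ[P] fun _ => τ₁)
    (hcond₂ : P[(fun ω => if y ω ≤ b (X ω) then (1 : ℝ) else 0) |
        MeasurableSpace.comap X inferInstance] =ᵐ[P] fun _ => τ₂) :
    ∀ j k : Fin d,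
      ∫ ω, ((if y ω ≤ a (X ω) then (1 : ℝ) else 0) - τ₁) *
            (((if y ω ≤ b (X ω) then (1 : ℝ) else 0) - τ₂) * (X ω j * X ω k)) ∂P
        = (min τ₁ τ₂ - τ₁ * τ₂) * ∫ ω, X ω j * X ω k ∂P := by
  intro j k
  have hm : MeasurableSpace.comap X inferInstance ≤ ‹MeasurableSpace Ω› := hX.comap_le
  set Ia : Ω → ℝ := fun ω => if y ω ≤ a (X ω) then (1 : ℝ) else 0 with hIa_def
  set Ib : Ω → ℝ := fun ω => if y ω ≤ b (X ω) then (1 : ℝ) else 0 with hIb_def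
  set g : Ω → ℝ := fun ω => X ω j * X ω k with hg_def
  have hIa_meas : Measurable Ia :=
    Measurable.ite (measurableSet_le hy (ha.comp hX)) measurable_const measurable_const
  have hIb_meas : Measurable Ib :=
    Measurable.ite (measurableSet_le hy (hb.comp hX)) measurable_const measurable_const
  have hIa_bdd : ∀ ω, |Ia ω| ≤ 1 := by
    intro ω; simp only [hIa_def]; split <;> simp
  have hIb_bdd : ∀ ω, |Ib ω| ≤ 1 := by
    intro ω; simp only [hIb_def]; split <;> simp
  -- g is m-strongly-measurable
  have hXm : Measurable[MeasurableSpace.comap X inferInstance] X :=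
    Measurable.of_comap_le le_rfl
  have hj : Measurable (fun x : EuclideanSpace ℝ (Fin d) => x j) := by fun_prop
  have hk : Measurable (fun x : EuclideanSpace ℝ (Fin d) => x k) := by fun_prop
  have hg_sm : StronglyMeasurable[MeasurableSpace.comap X inferInstance] g :=
    ((hj.comp hXm).mul (hk.comp hXm)).stronglyMeasurable
  have hg_meas : Measurable g :=
    (hj.comp hX).mul (hk.comp hX)
  have hg_bound : ∀ ω, ‖g ω‖ ≤ ‖X ω‖ ^ 2 := by
    intro ω
    have h1 := euclid_coord_abs_le_norm (X ω) j
    have h2 := euclid_coord_abs_le_norm (X ω) k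
    calc ‖g ω‖ = |X ω j| * |X ω k| := by simp [hg_def, abs_mul]
    _ ≤ ‖X ω‖ * ‖X ω‖ :=
        mul_le_mul h1 h2 (abs_nonneg _) (norm_nonneg _)
    _ = ‖X ω‖ ^ 2 := (sq ‖X ω‖).symm
  have hg_int : Integrable g P :=
    hX2.mono' hg_meas.aestronglyMeasurable (ae_of_all _ hg_bound)
  -- key computation lemma
  have key : ∀ (I : Ω → ℝ) (τ : ℝ), Measurable I → (∀ ω, |I ω| ≤ 1) →
      (P[I | MeasurableSpace.comap X inferInstance] =ᵐ[P] fun _ => τ) →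
      ∫ ω, I ω * g ω ∂P = τ * ∫ ω, g ω ∂P := by
    intro I τ hI_meas hI_bdd hcond
    have hIg_int : Integrable (g * I) P := by
      apply hg_int.mono (hg_meas.mul hI_meas).aestronglyMeasurable
      refine ae_of_all _ fun ω => ?_
      calc ‖(g * I) ω‖ = ‖g ω‖ * |I ω| := by simp [abs_mul]
      _ ≤ ‖g ω‖ * 1 := mul_le_mul_of_nonneg_left (hI_bdd ω) (norm_nonneg _)
      _ = ‖g ω‖ := mul_one _
    have hI_int : Integrable I P := by
      apply (integrable_const (1 : ℝ)).mono' hI_meas.aestronglyMeasurable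
      exact ae_of_all _ fun ω => by simpa using hI_bdd ω
    have hpull : P[g * I | MeasurableSpace.comap X inferInstance]
        =ᵐ[P] g * P[I | MeasurableSpace.comap X inferInstance] :=
      condExp_mul_of_stronglyMeasurable_left hg_sm hIg_int hI_int
    have h2 : P[g * I | MeasurableSpace.comap X inferInstance] =ᵐ[P] fun ω => g ω * τ := by
      filter_upwards [hpull, hcond] with ω h1 h2
      simp [h1, Pi.mul_apply, h2]
    calc ∫ ω, I ω * g ω ∂P = ∫ ω, (g * I) ω ∂P := by
          simp_rw [Pi.mul_apply, mul_comm]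
    _ = ∫ ω, (P[g * I | MeasurableSpace.comap X inferInstance]) ω ∂P :=
          (integral_condExp hm).symm
    _ = ∫ ω, g ω * τ ∂P := integral_congr_ae h2
    _ = τ * ∫ ω, g ω ∂P := by rw [integral_mul_const]; ring
  have hA : ∫ ω, Ia ω * g ω ∂P = τ₁ * ∫ ω, g ω ∂P := key Ia τ₁ hIa_meas hIa_bdd hcond₁
  have hB : ∫ ω, Ib ω * g ω ∂P = τ₂ * ∫ ω, g ω ∂P := key Ib τ₂ hIb_meas hIb_bdd hcond₂
  -- pointwise a.e. decomposition
  have hdecomp : ∀ᵐ ω ∂P, (Ia ω - τ₁) * ((Ib ω - τ₂) * g ω)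
      = (1 - τ₂) * (Ia ω * g ω) - τ₁ * (Ib ω * g ω) + (τ₁ * τ₂) * g ω := by
    filter_upwards [hab] with ω hω
    have hIaIb : Ia ω * Ib ω = Ia ω := by
      simp only [hIa_def, hIb_def]
      by_cases h : y ω ≤ a (X ω)
      · simp [h, le_trans h hω]
      · simp [h]
    linear_combination g ω * hIaIb
  have hIag_int : Integrable (fun ω => Ia ω * g ω) P := by
    apply hg_int.mono (hIa_meas.mul hg_meas).aestronglyMeasurable
    refine ae_of_all _ fun ω => ?_
    calc ‖Ia ω * g ω‖ = |Ia ω| * ‖g ω‖ := by simp [abs_mul]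
    _ ≤ 1 * ‖g ω‖ := mul_le_mul_of_nonneg_right (hIa_bdd ω) (norm_nonneg _)
    _ = ‖g ω‖ := one_mul _
  have hIbg_int : Integrable (fun ω => Ib ω * g ω) P := by
    apply hg_int.mono (hIb_meas.mul hg_meas).aestronglyMeasurable
    refine ae_of_all _ fun ω => ?_
    calc ‖Ib ω * g ω‖ = |Ib ω| * ‖g ω‖ := by simp [abs_mul]
    _ ≤ 1 * ‖g ω‖ := mul_le_mul_of_nonneg_right (hIb_bdd ω) (norm_nonneg _)
    _ = ‖g ω‖ := one_mul _
  have hmin : min τ₁ τ₂ = τ₁ := min_eq_left hτ₁₂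
  calc ∫ ω, (Ia ω - τ₁) * ((Ib ω - τ₂) * g ω) ∂P
      = ∫ ω, ((1 - τ₂) * (Ia ω * g ω) - τ₁ * (Ib ω * g ω) + (τ₁ * τ₂) * g ω) ∂P :=
        integral_congr_ae hdecomp
    _ = (∫ ω, ((1 - τ₂) * (Ia ω * g ω) - τ₁ * (Ib ω * g ω)) ∂P)
        + ∫ ω, (τ₁ * τ₂) * g ω ∂P := by
        exact integral_add ((hIag_int.const_mul _).sub (hIbg_int.const_mul _))
          (hg_int.const_mul _)
    _ = ((1 - τ₂) * ∫ ω, Ia ω * g ω ∂P) - (τ₁ * ∫ ω, Ib ω * g ω ∂P)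
        + (τ₁ * τ₂) * ∫ ω, g ω ∂P := by
        rw [integral_sub (hIag_int.const_mul _) (hIbg_int.const_mul _),
          integral_const_mul, integral_const_mul, integral_const_mul]
    _ = (min τ₁ τ₂ - τ₁ * τ₂) * ∫ ω, g ω ∂P := by
        rw [hA, hB, hmin]; ring
end

section
/- The true parameter minimizes the population check loss: if κ x((−∞, ⟨x, β*⟩]) = τ for ν-almost every x, then for every β ∈ ℝ^d, ∫ [ ρ_τ(y − ⟨x, β⟩) − ρ_τ(y − ⟨x, β*⟩) ] dμ(x, y) ≥ 0; the integrand is μ-integrable since its absolute value is bounded by ‖x‖‖β − β*‖. -/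
open MeasureTheory ProbabilityTheory
open scoped RealInnerProductSpace ENNReal

/-- The check (pinball) loss function `ρ_τ(u) = u (τ - 1{u ≤ 0})`. -/
noncomputable def checkFn (τ u : ℝ) : ℝ := u * (τ - if u ≤ 0 then 1 else 0)

lemma checkFn_sub_ge (τ u v : ℝ) :
    (v - u) * (τ - if u ≤ 0 then 1 else 0) ≤ checkFn τ v - checkFn τ u := by
  unfold checkFn
  by_cases hu : u ≤ 0 <;> by_cases hv : v ≤ 0 <;> simp [hu, hv] <;> (try push_neg at *) <;> nlinarith

lemma checkFn_lip {τ : ℝ} (hτ : τ ∈ Set.Ioo (0 : ℝ) 1) (u v : ℝ) :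
    |checkFn τ v - checkFn τ u| ≤ |v - u| := by
  obtain ⟨h0, h1⟩ := hτ
  unfold checkFn
  rw [abs_le]
  constructor <;>
    · by_cases hu : u ≤ 0 <;> by_cases hv : v ≤ 0 <;> simp [hu, hv] <;>
        cases abs_cases (v - u) <;> (try push_neg at *) <;> nlinarith

lemma measurable_checkFn (τ : ℝ) : Measurable (checkFn τ) := by
  unfold checkFn
  exact measurable_id.mul ((measurable_const.sub
    (Measurable.ite (measurableSet_le measurable_id measurable_const)
      measurable_const measurable_const)))

/-- The true parameter minimizes the population check loss.  If
`κ x((−∞, ⟨x, β*⟩]) = τ` for `ν`-a.e. `x`, then for every `β`,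
`∫ [ρ_τ(y − ⟨x, β⟩) − ρ_τ(y − ⟨x, β*⟩)] dμ ≥ 0` with `μ = ν ⊗ₖ κ`. -/
theorem qr_population_minimizer (d : ℕ) (τ : ℝ) (hτ : τ ∈ Set.Ioo (0 : ℝ) 1)
    (ν : Measure (EuclideanSpace ℝ (Fin d))) [IsProbabilityMeasure ν]
    (hνmom : Integrable (fun x => ‖x‖) ν)
    (κ : Kernel (EuclideanSpace ℝ (Fin d)) ℝ) [IsMarkovKernel κ]
    (βstar : EuclideanSpace ℝ (Fin d))
    (hquant : ∀ᵐ x ∂ν, κ x (Set.Iic ⟪x, βstar⟫) = ENNReal.ofReal τ) :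
    ∀ β : EuclideanSpace ℝ (Fin d),
      0 ≤ ∫ z : EuclideanSpace ℝ (Fin d) × ℝ,
            (checkFn τ (z.2 - ⟪z.1, β⟫) - checkFn τ (z.2 - ⟪z.1, βstar⟫))
          ∂(ν.compProd κ) := by
  intro β
  set μ := ν.compProd κ with hμ
  -- basic measurable maps
  have hinner : ∀ γ : EuclideanSpace ℝ (Fin d), Measurable fun x : EuclideanSpace ℝ (Fin d) => ⟪x, γ⟫ :=
    fun γ => (continuous_id.inner continuous_const).measurable
  have hmF : Measurable fun z : EuclideanSpace ℝ (Fin d) × ℝ =>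
      checkFn τ (z.2 - ⟪z.1, β⟫) - checkFn τ (z.2 - ⟪z.1, βstar⟫) := by
    apply Measurable.sub
    · exact (measurable_checkFn τ).comp (measurable_snd.sub ((hinner β).comp measurable_fst))
    · exact (measurable_checkFn τ).comp (measurable_snd.sub ((hinner βstar).comp measurable_fst))
  have hmG : Measurable fun z : EuclideanSpace ℝ (Fin d) × ℝ =>
      (⟪z.1, βstar⟫ - ⟪z.1, β⟫) * (τ - if z.2 - ⟪z.1, βstar⟫ ≤ 0 then 1 else 0) := by
    apply Measurable.mul
    · exact ((hinner βstar).comp measurable_fst).sub ((hinner β).comp measurable_fst)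
    · apply Measurable.sub measurable_const
      exact Measurable.ite
        (measurableSet_le (measurable_snd.sub ((hinner βstar).comp measurable_fst)) measurable_const)
        measurable_const measurable_const
  -- dominating function
  have hdom : Integrable (fun z : EuclideanSpace ℝ (Fin d) × ℝ => ‖z.1‖ * ‖β - βstar‖) μ := by
    apply Integrable.mul_const
    have : Integrable (fun x : EuclideanSpace ℝ (Fin d) => ‖x‖) (Measure.map Prod.fst μ) := by
      have : Measure.map Prod.fst μ = ν := by
        rw [hμ, ← Measure.fst, Measure.fst_compProd]
      rwa [this]
    exact this.comp_measurable measurable_fst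
  have hboundF : ∀ z : EuclideanSpace ℝ (Fin d) × ℝ,
      |checkFn τ (z.2 - ⟪z.1, β⟫) - checkFn τ (z.2 - ⟪z.1, βstar⟫)| ≤ ‖z.1‖ * ‖β - βstar‖ := by
    intro z
    calc |checkFn τ (z.2 - ⟪z.1, β⟫) - checkFn τ (z.2 - ⟪z.1, βstar⟫)|
        ≤ |(z.2 - ⟪z.1, β⟫) - (z.2 - ⟪z.1, βstar⟫)| := checkFn_lip hτ _ _
      _ = |⟪z.1, βstar - β⟫| := by rw [inner_sub_right]; ring_nf
      _ ≤ ‖z.1‖ * ‖βstar - β‖ := abs_real_inner_le_norm _ _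
      _ = ‖z.1‖ * ‖β - βstar‖ := by rw [norm_sub_rev]
  have hintF : Integrable (fun z : EuclideanSpace ℝ (Fin d) × ℝ =>
      checkFn τ (z.2 - ⟪z.1, β⟫) - checkFn τ (z.2 - ⟪z.1, βstar⟫)) μ := by
    refine hdom.mono hmF.aestronglyMeasurable (Filter.Eventually.of_forall fun z => ?_)
    rw [Real.norm_eq_abs]
    refine (hboundF z).trans ?_
    rw [Real.norm_eq_abs, abs_mul, abs_norm, abs_norm]
  have hboundG : ∀ z : EuclideanSpace ℝ (Fin d) × ℝ,
      |(⟪z.1, βstar⟫ - ⟪z.1, β⟫) * (τ - if z.2 - ⟪z.1, βstar⟫ ≤ 0 then 1 else 0)|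
        ≤ ‖z.1‖ * ‖β - βstar‖ := by
    intro z
    obtain ⟨h0, h1⟩ := hτ
    rw [abs_mul]
    have h2 : |τ - if z.2 - ⟪z.1, βstar⟫ ≤ 0 then 1 else 0| ≤ 1 := by
      split <;> rw [abs_le] <;> constructor <;> linarith
    have h3 : |⟪z.1, βstar⟫ - ⟪z.1, β⟫| ≤ ‖z.1‖ * ‖β - βstar‖ := by
      calc |⟪z.1, βstar⟫ - ⟪z.1, β⟫| = |⟪z.1, βstar - β⟫| := by rw [inner_sub_right]
        _ ≤ ‖z.1‖ * ‖βstar - β‖ := abs_real_inner_le_norm _ _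
        _ = ‖z.1‖ * ‖β - βstar‖ := by rw [norm_sub_rev]
    calc |⟪z.1, βstar⟫ - ⟪z.1, β⟫| * |τ - if z.2 - ⟪z.1, βstar⟫ ≤ 0 then 1 else 0|
        ≤ |⟪z.1, βstar⟫ - ⟪z.1, β⟫| * 1 := by
          exact mul_le_mul_of_nonneg_left h2 (abs_nonneg _)
      _ = |⟪z.1, βstar⟫ - ⟪z.1, β⟫| := mul_one _
      _ ≤ ‖z.1‖ * ‖β - βstar‖ := h3
  have hintG : Integrable (fun z : EuclideanSpace ℝ (Fin d) × ℝ =>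
      (⟪z.1, βstar⟫ - ⟪z.1, β⟫) * (τ - if z.2 - ⟪z.1, βstar⟫ ≤ 0 then 1 else 0)) μ := by
    refine hdom.mono hmG.aestronglyMeasurable (Filter.Eventually.of_forall fun z => ?_)
    rw [Real.norm_eq_abs]
    refine (hboundG z).trans ?_
    rw [Real.norm_eq_abs, abs_mul, abs_norm, abs_norm]
  -- ∫ G = 0
  have hGzero : ∫ z : EuclideanSpace ℝ (Fin d) × ℝ,
      (⟪z.1, βstar⟫ - ⟪z.1, β⟫) * (τ - if z.2 - ⟪z.1, βstar⟫ ≤ 0 then 1 else 0) ∂μ = 0 := by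
    rw [hμ, Measure.integral_compProd hintG]
    apply integral_eq_zero_of_ae
    filter_upwards [hquant] with x hx
    have hind : ∀ y : ℝ, (τ - if y - ⟪x, βstar⟫ ≤ 0 then 1 else 0)
        = τ - (Set.Iic (⟪x, βstar⟫ : ℝ)).indicator (fun _ => (1:ℝ)) y := by
      intro y
      congr 1
      rw [Set.indicator_apply]
      simp [Set.mem_Iic, sub_nonpos]
    simp_rw [hind]
    rw [integral_const_mul]
    have hint1 : Integrable ((Set.Iic (⟪x, βstar⟫ : ℝ)).indicator (fun _ => (1:ℝ))) (κ x) :=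
      (integrable_const (1:ℝ)).indicator measurableSet_Iic
    rw [integral_sub (integrable_const τ) hint1, integral_const, integral_indicator_const _ measurableSet_Iic]
    simp only [measure_univ, ENNReal.toReal_one, one_smul, smul_eq_mul, mul_one, hx,
      ENNReal.toReal_ofReal hτ.1.le, sub_self, mul_zero]
    simp [measureReal_def, hx, ENNReal.toReal_ofReal hτ.1.le]
  -- pointwise inequality and conclusion
  have hmono : ∀ z : EuclideanSpace ℝ (Fin d) × ℝ,
      (⟪z.1, βstar⟫ - ⟪z.1, β⟫) * (τ - if z.2 - ⟪z.1, βstar⟫ ≤ 0 then 1 else 0)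
        ≤ checkFn τ (z.2 - ⟪z.1, β⟫) - checkFn τ (z.2 - ⟪z.1, βstar⟫) := by
    intro z
    have := checkFn_sub_ge τ (z.2 - ⟪z.1, βstar⟫) (z.2 - ⟪z.1, β⟫)
    have harg : (z.2 - ⟪z.1, β⟫) - (z.2 - ⟪z.1, βstar⟫) = ⟪z.1, βstar⟫ - ⟪z.1, β⟫ := by ring
    rwa [harg] at this
  calc (0:ℝ) = ∫ z : EuclideanSpace ℝ (Fin d) × ℝ,
        (⟪z.1, βstar⟫ - ⟪z.1, β⟫) * (τ - if z.2 - ⟪z.1, βstar⟫ ≤ 0 then 1 else 0) ∂μ := hGzero.symm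
    _ ≤ _ := integral_mono hintG hintF hmono
end

section
/- Lipschitz continuity of the population quantile-regression score: define G(β) := ∫ x (1{y ≤ ⟨x, β⟩} − τ) dμ(x, y) ∈ ℝ^d. Then for all β₁, β₂ ∈ ℝ^d, ‖G(β₁) − G(β₂)‖ ≤ M (∫ ‖x‖² dν(x)) ‖β₁ − β₂‖. -/
open MeasureTheory ProbabilityTheory
open scoped RealInnerProductSpace ENNReal

lemma qr_abs_ind_sub (a b y : ℝ) :
    |(if y ≤ a then (1:ℝ) else 0) - (if y ≤ b then 1 else 0)|
      = Set.indicator (Set.Ioc (min a b) (max a b)) (fun _ => (1:ℝ)) y := by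
  rcases le_total a b with h | h <;>
    simp only [Set.indicator, Set.mem_Ioc, min_eq_left h, max_eq_right h,
      min_eq_right h, max_eq_left h] <;>
    split_ifs <;> simp_all <;> linarith

/-- Lipschitz continuity of the population quantile-regression score
`G(β) = ∫ x (1{y ≤ ⟨x,β⟩} − τ) dμ(x,y)`, `μ = ν ⊗ₖ κ`: if the conditional CDFs are
uniformly `M`-Lipschitz, then `‖G(β₁) − G(β₂)‖ ≤ M (∫‖x‖² dν) ‖β₁ − β₂‖`. -/
theorem qr_population_score_lipschitz (d : ℕ) (τ : ℝ) (hτ : τ ∈ Set.Ioo (0 : ℝ) 1)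
    (ν : Measure (EuclideanSpace ℝ (Fin d))) [IsProbabilityMeasure ν]
    (κ : Kernel (EuclideanSpace ℝ (Fin d)) ℝ) [IsMarkovKernel κ]
    (hν2 : Integrable (fun x => ‖x‖ ^ 2) ν)
    (M : ℝ)
    (hLip : ∀ (x : EuclideanSpace ℝ (Fin d)) (s t : ℝ), s ≤ t →
      κ x (Set.Ioc s t) ≤ ENNReal.ofReal (M * (t - s))) :
    ∀ β₁ β₂ : EuclideanSpace ℝ (Fin d),
      ‖(∫ z : EuclideanSpace ℝ (Fin d) × ℝ,
            ((if z.2 ≤ ⟪z.1, β₁⟫ then (1 : ℝ) else 0) - τ) • z.1 ∂(ν.compProd κ)) -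
        (∫ z : EuclideanSpace ℝ (Fin d) × ℝ,
            ((if z.2 ≤ ⟪z.1, β₂⟫ then (1 : ℝ) else 0) - τ) • z.1 ∂(ν.compProd κ))‖
      ≤ M * (∫ x, ‖x‖ ^ 2 ∂ν) * ‖β₁ - β₂‖ := by
  have hE : True := trivial
  intro β₁ β₂
  -- M is nonnegative
  have hM : 0 ≤ M := by
    by_contra hM
    push_neg at hM
    have huniv : (Set.univ : Set ℝ) ⊆ ⋃ n : ℕ, Set.Ioc (-(n:ℝ)) n := by
      intro y _
      obtain ⟨n, hn⟩ := exists_nat_gt |y|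
      exact Set.mem_iUnion.2 ⟨n, (abs_lt.mp hn).1, le_of_lt (abs_lt.mp hn).2⟩
    have h0 : (κ 0 : Measure ℝ) Set.univ = 1 := measure_univ
    have h1 : (κ 0 : Measure ℝ) Set.univ ≤ ∑' n : ℕ, (κ 0) (Set.Ioc (-(n:ℝ)) n) :=
      (measure_mono huniv).trans (measure_iUnion_le _)
    have h2 : ∀ n : ℕ, (κ 0) (Set.Ioc (-(n:ℝ)) n) = 0 := by
      intro n
      have hn0 : (0:ℝ) ≤ (n:ℝ) := Nat.cast_nonneg n
      have h := hLip 0 (-(n:ℝ)) n (by linarith)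
      have hle : M * ((n:ℝ) - -(n:ℝ)) ≤ 0 := by nlinarith
      have hz : ENNReal.ofReal (M * ((n:ℝ) - -(n:ℝ))) = 0 := ENNReal.ofReal_eq_zero.2 hle
      exact le_antisymm (hz ▸ h) (zero_le)
    simp [h2, h0] at h1
  -- integrability
  have hnormx : Integrable (fun x : EuclideanSpace ℝ (Fin d) => ‖x‖) ν := by
    refine (hν2.add (integrable_const 1)).mono
      continuous_norm.aestronglyMeasurable ?_
    filter_upwards with x
    have h1 : ‖x‖ ≤ ‖x‖ ^ 2 + 1 := by nlinarith [norm_nonneg (x : EuclideanSpace ℝ (Fin d))]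
    have h2 : (0:ℝ) ≤ ‖x‖ ^ 2 + 1 := by positivity
    simpa [Real.norm_eq_abs, abs_of_nonneg (norm_nonneg (x : EuclideanSpace ℝ (Fin d))), abs_of_nonneg h2] using h1
  have hfst : Integrable (fun z : EuclideanSpace ℝ (Fin d) × ℝ => ‖z.1‖) (ν.compProd κ) := by
    have hmap : (ν.compProd κ).map Prod.fst = ν := Measure.fst_compProd ν κ
    have h' : Integrable (fun x : EuclideanSpace ℝ (Fin d) => ‖x‖)
        ((ν.compProd κ).map Prod.fst) := by rw [hmap]; exact hnormx
    have := (integrable_map_measure continuous_norm.aestronglyMeasurable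
      measurable_fst.aemeasurable (μ := ν.compProd κ)).mp h'
    exact this
  have hmeas : ∀ β : EuclideanSpace ℝ (Fin d), AEStronglyMeasurable
      (fun z : EuclideanSpace ℝ (Fin d) × ℝ => ((if z.2 ≤ ⟪z.1, β⟫ then (1:ℝ) else 0) - τ) • z.1)
      (ν.compProd κ) := by
    intro β
    have hs : MeasurableSet {z : EuclideanSpace ℝ (Fin d) × ℝ | z.2 ≤ ⟪z.1, β⟫} :=
      measurableSet_le measurable_snd
        (continuous_fst.inner continuous_const).measurable
    exact ((((Measurable.ite hs measurable_const measurable_const : Measurable fun z : EuclideanSpace ℝ (Fin d) × ℝ => if z.2 ≤ ⟪z.1, β⟫ then (1:ℝ) else 0).sub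
      measurable_const).smul measurable_fst).aestronglyMeasurable :)
  have hint : ∀ β : EuclideanSpace ℝ (Fin d), Integrable
      (fun z : EuclideanSpace ℝ (Fin d) × ℝ => ((if z.2 ≤ ⟪z.1, β⟫ then (1:ℝ) else 0) - τ) • z.1)
      (ν.compProd κ) := by
    intro β
    refine (hfst.const_mul (1 + |τ|)).mono' (hmeas β) ?_
    filter_upwards with z
    rw [norm_smul, Real.norm_eq_abs]
    gcongr
    calc |(if z.2 ≤ ⟪z.1, β⟫ then (1:ℝ) else 0) - τ|
        ≤ |(if z.2 ≤ ⟪z.1, β⟫ then (1:ℝ) else 0)| + |τ| := abs_sub _ _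
      _ ≤ 1 + |τ| := by gcongr; split_ifs <;> simp
  -- difference of integrals
  set g : EuclideanSpace ℝ (Fin d) × ℝ → EuclideanSpace ℝ (Fin d) := fun z =>
    ((if z.2 ≤ ⟪z.1, β₁⟫ then (1:ℝ) else 0) - (if z.2 ≤ ⟪z.1, β₂⟫ then 1 else 0)) • z.1
    with hg_def
  have hg_eq : ∀ z : EuclideanSpace ℝ (Fin d) × ℝ,
      g z = ((if z.2 ≤ ⟪z.1, β₁⟫ then (1:ℝ) else 0) - τ) • z.1
        - ((if z.2 ≤ ⟪z.1, β₂⟫ then (1:ℝ) else 0) - τ) • z.1 := by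
    intro z; rw [hg_def, ← sub_smul]; ring_nf
  have hg_int : Integrable g (ν.compProd κ) := by
    have := (hint β₁).sub (hint β₂)
    refine this.congr ?_
    filter_upwards with z using (hg_eq z).symm
  have key : (∫ z, ((if z.2 ≤ ⟪z.1, β₁⟫ then (1:ℝ) else 0) - τ) • z.1 ∂(ν.compProd κ))
      - (∫ z, ((if z.2 ≤ ⟪z.1, β₂⟫ then (1:ℝ) else 0) - τ) • z.1 ∂(ν.compProd κ))
      = ∫ z, g z ∂(ν.compProd κ) := by
    rw [← integral_sub (hint β₁) (hint β₂)]
    exact integral_congr_ae (Filter.Eventually.of_forall fun z => (hg_eq z).symm)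
  rw [key]
  -- bound by iterated integral of norms
  have hgnorm_int : Integrable (fun z => ‖g z‖) (ν.compProd κ) := hg_int.norm
  have hswap : ∫ z, ‖g z‖ ∂(ν.compProd κ) = ∫ x, ∫ y, ‖g (x, y)‖ ∂(κ x) ∂ν :=
    Measure.integral_compProd hgnorm_int
  have hinner_int : Integrable (fun x => ∫ y, ‖g (x, y)‖ ∂(κ x)) ν :=
    ((Measure.integrable_compProd_iff hg_int.aestronglyMeasurable).mp hg_int).2
  -- pointwise bound on the inner integral
  have hbound : ∀ x : EuclideanSpace ℝ (Fin d), ∫ y, ‖g (x, y)‖ ∂(κ x) ≤ M * ‖x‖ ^ 2 * ‖β₁ - β₂‖ := by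
    intro x
    set a := ⟪x, β₁⟫
    set b := ⟪x, β₂⟫
    have hnorm_eq : ∀ y : ℝ, ‖g (x, y)‖
        = Set.indicator (Set.Ioc (min a b) (max a b)) (fun _ => (1:ℝ)) y * ‖x‖ := by
      intro y
      rw [hg_def]
      simp only [norm_smul, Real.norm_eq_abs]
      rw [qr_abs_ind_sub a b y]
    have hIoc : MeasurableSet (Set.Ioc (min a b) (max a b)) := measurableSet_Ioc
    have hcalc : ∫ y, ‖g (x, y)‖ ∂(κ x)
        = ((κ x) (Set.Ioc (min a b) (max a b))).toReal * ‖x‖ := by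
      simp_rw [hnorm_eq]
      rw [integral_mul_const, integral_indicator_const _ hIoc]
      simp [measureReal_def]
    rw [hcalc]
    have hκle : ((κ x) (Set.Ioc (min a b) (max a b))).toReal ≤ M * |a - b| := by
      have h := hLip x (min a b) (max a b) (min_le_max)
      have hnn : 0 ≤ M * (max a b - min a b) :=
        mul_nonneg hM (by simp [sub_nonneg, min_le_max])
      have := ENNReal.toReal_le_of_le_ofReal hnn h
      rw [max_sub_min_eq_abs, abs_sub_comm] at this
      exact this
    have habs : |a - b| ≤ ‖x‖ * ‖β₁ - β₂‖ := by
      have : a - b = ⟪x, β₁ - β₂⟫ := by simp [a, b, inner_sub_right]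
      rw [this]
      exact abs_real_inner_le_norm x (β₁ - β₂)
    calc ((κ x) (Set.Ioc (min a b) (max a b))).toReal * ‖x‖
        ≤ (M * |a - b|) * ‖x‖ := by
          have := norm_nonneg (x : EuclideanSpace ℝ (Fin d))
          gcongr
      _ ≤ (M * (‖x‖ * ‖β₁ - β₂‖)) * ‖x‖ := by gcongr
      _ = M * ‖x‖ ^ 2 * ‖β₁ - β₂‖ := by ring
  have hrhs_int : Integrable (fun x : EuclideanSpace ℝ (Fin d) => M * ‖x‖ ^ 2 * ‖β₁ - β₂‖) ν :=
    (hν2.const_mul M).mul_const _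
  calc ‖∫ z, g z ∂(ν.compProd κ)‖ ≤ ∫ z, ‖g z‖ ∂(ν.compProd κ) :=
        norm_integral_le_integral_norm g
    _ = ∫ x, ∫ y, ‖g (x, y)‖ ∂(κ x) ∂ν := hswap
    _ ≤ ∫ x, M * ‖x‖ ^ 2 * ‖β₁ - β₂‖ ∂ν := integral_mono hinner_int hrhs_int hbound
    _ = M * (∫ x, ‖x‖ ^ 2 ∂ν) * ‖β₁ - β₂‖ := by
        rw [integral_mul_const, integral_const_mul]
end

section
/- Second-moment continuity of the quantile-regression subgradient in the parameter: for all β₁, β₂ ∈ ℝ^d, ∫ ‖x‖² | 1{y ≤ ⟨x, β₁⟩} − 1{y ≤ ⟨x, β₂⟩} | dμ(x, y) ≤ M (∫ ‖x‖³ dν(x)) ‖β₁ − β₂‖. In particular, ∫ ‖ x(1{y ≤ ⟨x,β₁⟩} − τ) − x(1{y ≤ ⟨x,β₂⟩} − τ) ‖² dμ ≤ M (∫ ‖x‖³ dν) ‖β₁ − β₂‖. -/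
open MeasureTheory ProbabilityTheory
open scoped RealInnerProductSpace ENNReal

/-- Second-moment continuity of the quantile-regression subgradient in the
parameter: with `μ = ν ⊗ₖ κ` and uniformly `M`-Lipschitz conditional CDFs, for all
`β₁, β₂`, `∫ ‖x‖² |1{y ≤ ⟨x,β₁⟩} − 1{y ≤ ⟨x,β₂⟩}| dμ ≤ M (∫‖x‖³ dν) ‖β₁ − β₂‖`; in
particular `∫ ‖x(1{y ≤ ⟨x,β₁⟩} − τ) − x(1{y ≤ ⟨x,β₂⟩} − τ)‖² dμ` satisfies the same
bound. -/
theorem qr_subgradient_second_moment_continuity (d : ℕ) (τ : ℝ)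
    (hτ : τ ∈ Set.Ioo (0 : ℝ) 1)
    (ν : Measure (EuclideanSpace ℝ (Fin d))) [IsProbabilityMeasure ν]
    (κ : Kernel (EuclideanSpace ℝ (Fin d)) ℝ) [IsMarkovKernel κ]
    (hν3 : Integrable (fun x => ‖x‖ ^ 3) ν)
    (M : ℝ)
    (hLip : ∀ (x : EuclideanSpace ℝ (Fin d)) (s t : ℝ), s ≤ t →
      κ x (Set.Ioc s t) ≤ ENNReal.ofReal (M * (t - s))) :
    ∀ β₁ β₂ : EuclideanSpace ℝ (Fin d),
      (∫⁻ z : EuclideanSpace ℝ (Fin d) × ℝ,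
          ENNReal.ofReal (‖z.1‖ ^ 2 *
            |(if z.2 ≤ ⟪z.1, β₁⟫ then (1 : ℝ) else 0) -
             (if z.2 ≤ ⟪z.1, β₂⟫ then (1 : ℝ) else 0)|) ∂(ν.compProd κ))
        ≤ ENNReal.ofReal (M * (∫ x, ‖x‖ ^ 3 ∂ν) * ‖β₁ - β₂‖) ∧
      (∫⁻ z : EuclideanSpace ℝ (Fin d) × ℝ,
          ENNReal.ofReal (‖((if z.2 ≤ ⟪z.1, β₁⟫ then (1 : ℝ) else 0) - τ) • z.1 -
            ((if z.2 ≤ ⟪z.1, β₂⟫ then (1 : ℝ) else 0) - τ) • z.1‖ ^ 2) ∂(ν.compProd κ))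
        ≤ ENNReal.ofReal (M * (∫ x, ‖x‖ ^ 3 ∂ν) * ‖β₁ - β₂‖) := by
  classical
  -- M is nonnegative
  have hM : 0 ≤ M := by
    by_contra h
    push_neg at h
    have h1 : ∀ n : ℕ, κ 0 (Set.Ioc (-(n : ℝ) - 1) (n + 1)) = 0 := by
      intro n
      have hle : (-(n : ℝ) - 1) ≤ (n + 1 : ℝ) := by
        have : (0 : ℝ) ≤ (n : ℝ) := n.cast_nonneg
        linarith
      have := hLip 0 (-(n : ℝ) - 1) (n + 1) hle
      have hneg : M * ((n + 1 : ℝ) - (-(n : ℝ) - 1)) ≤ 0 := by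
        have h2 : (0 : ℝ) ≤ (n + 1 : ℝ) - (-(n : ℝ) - 1) := by linarith
        exact mul_nonpos_of_nonpos_of_nonneg h.le h2
      rw [ENNReal.ofReal_eq_zero.mpr hneg] at this
      exact le_antisymm this zero_le
    have hcov : (Set.univ : Set ℝ) ⊆ ⋃ n : ℕ, Set.Ioc (-(n : ℝ) - 1) (n + 1) := by
      intro y _
      obtain ⟨n, hn⟩ := exists_nat_ge |y| 
      refine Set.mem_iUnion.mpr ⟨n, ?_⟩
      have h1 := abs_le.mp hn
      exact ⟨by linarith [h1.1], by linarith [h1.2]⟩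
    have hle : κ 0 Set.univ ≤ ∑' n : ℕ, κ 0 (Set.Ioc (-(n : ℝ) - 1) (n + 1)) :=
      le_trans (measure_mono hcov) (measure_iUnion_le _)
    simp only [h1, tsum_zero, measure_univ] at hle
    exact absurd hle (by simp)
  intro β₁ β₂
  -- measurability of the indicator functions
  have hmeasb : ∀ β : EuclideanSpace ℝ (Fin d), Measurable (fun z : EuclideanSpace ℝ (Fin d) × ℝ => if z.2 ≤ ⟪z.1, β⟫ then (1 : ℝ) else 0) := by
    intro β
    have hset : MeasurableSet {z : EuclideanSpace ℝ (Fin d) × ℝ | z.2 ≤ ⟪z.1, β⟫} := by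
      apply measurableSet_le measurable_snd
      exact ((continuous_id.inner continuous_const).measurable).comp measurable_fst
    exact Measurable.ite hset measurable_const measurable_const
  have hf : Measurable (fun z : EuclideanSpace ℝ (Fin d) × ℝ =>
      ENNReal.ofReal (‖z.1‖ ^ 2 *
        |(if z.2 ≤ ⟪z.1, β₁⟫ then (1 : ℝ) else 0) -
         (if z.2 ≤ ⟪z.1, β₂⟫ then (1 : ℝ) else 0)|)) := by
    apply ENNReal.measurable_ofReal.comp
    apply Measurable.mul
    · exact (measurable_fst.norm.pow measurable_const)
    · exact ((hmeasb β₁).sub (hmeasb β₂)).abs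
  -- pointwise bound on the inner integral
  have key : ∀ x : EuclideanSpace ℝ (Fin d),
      (∫⁻ y, ENNReal.ofReal (‖x‖ ^ 2 *
          |(if y ≤ ⟪x, β₁⟫ then (1 : ℝ) else 0) - (if y ≤ ⟪x, β₂⟫ then (1 : ℝ) else 0)|) ∂(κ x))
        ≤ ENNReal.ofReal (M * ‖x‖ ^ 3 * ‖β₁ - β₂‖) := by
    intro x
    set s := ⟪x, β₁⟫ with hs
    set t := ⟪x, β₂⟫ with ht
    have heq : (fun y => ENNReal.ofReal (‖x‖ ^ 2 *
        |(if y ≤ s then (1 : ℝ) else 0) - (if y ≤ t then (1 : ℝ) else 0)|))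
        = (Set.Ioc (min s t) (max s t)).indicator (fun _ => ENNReal.ofReal (‖x‖ ^ 2)) := by
      funext y
      by_cases h1 : y ≤ s <;> by_cases h2 : y ≤ t <;>
        simp only [h1, h2, if_true, if_false, Set.indicator] <;>
        [skip; skip; skip; skip]
      · rw [if_neg]
        · norm_num
        · intro hmem
          exact absurd (le_min h1 h2) (not_le.mpr hmem.1)
      · rw [if_pos]
        · norm_num
        · push_neg at h2
          constructor
          · exact lt_of_le_of_lt (min_le_right s t) h2
          · exact le_trans h1 (le_max_left s t)
      · rw [if_pos]
        · norm_num
        · push_neg at h1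
          constructor
          · exact lt_of_le_of_lt (min_le_left s t) h1
          · exact le_trans h2 (le_max_right s t)
      · rw [if_neg]
        · norm_num
        · intro hmem
          push_neg at h1 h2
          exact absurd hmem.2 (not_le.mpr (max_lt h1 h2))
    have h2 : (∫⁻ y, ENNReal.ofReal (‖x‖ ^ 2 *
        |(if y ≤ s then (1 : ℝ) else 0) - (if y ≤ t then (1 : ℝ) else 0)|) ∂(κ x))
        = ENNReal.ofReal (‖x‖ ^ 2) * κ x (Set.Ioc (min s t) (max s t)) := by
      rw [show (fun y => ENNReal.ofReal (‖x‖ ^ 2 *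
          |(if y ≤ s then (1 : ℝ) else 0) - (if y ≤ t then (1 : ℝ) else 0)|)) = _ from heq]
      exact lintegral_indicator_const measurableSet_Ioc _
    rw [h2]
    have hbound : κ x (Set.Ioc (min s t) (max s t)) ≤ ENNReal.ofReal (M * (max s t - min s t)) :=
      hLip x _ _ (min_le_max)
    calc ENNReal.ofReal (‖x‖ ^ 2) * κ x (Set.Ioc (min s t) (max s t))
        ≤ ENNReal.ofReal (‖x‖ ^ 2) * ENNReal.ofReal (M * (max s t - min s t)) :=
          mul_le_mul_right hbound _
      _ = ENNReal.ofReal (‖x‖ ^ 2 * (M * (max s t - min s t))) := by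
          rw [← ENNReal.ofReal_mul (by positivity)]
      _ ≤ ENNReal.ofReal (M * ‖x‖ ^ 3 * ‖β₁ - β₂‖) := by
          apply ENNReal.ofReal_le_ofReal
          have habs : max s t - min s t = |s - t| := by
            rcases le_total s t with h | h
            · rw [max_eq_right h, min_eq_left h, abs_sub_comm, abs_of_nonneg (by linarith)]
            · rw [max_eq_left h, min_eq_right h, abs_of_nonneg (by linarith)]
          have hcs : |s - t| ≤ ‖x‖ * ‖β₁ - β₂‖ := by
            have : s - t = ⟪x, β₁ - β₂⟫ := by rw [hs, ht, inner_sub_right]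
            rw [this]
            exact abs_real_inner_le_norm x (β₁ - β₂)
          rw [habs]
          calc ‖x‖ ^ 2 * (M * |s - t|) ≤ ‖x‖ ^ 2 * (M * (‖x‖ * ‖β₁ - β₂‖)) := by
                apply mul_le_mul_of_nonneg_left _ (by positivity)
                exact mul_le_mul_of_nonneg_left hcs hM
            _ = M * ‖x‖ ^ 3 * ‖β₁ - β₂‖ := by ring
  -- the main bound for the first integral
  have hmain : (∫⁻ z : EuclideanSpace ℝ (Fin d) × ℝ,
      ENNReal.ofReal (‖z.1‖ ^ 2 *
        |(if z.2 ≤ ⟪z.1, β₁⟫ then (1 : ℝ) else 0) -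
         (if z.2 ≤ ⟪z.1, β₂⟫ then (1 : ℝ) else 0)|) ∂(ν.compProd κ))
      ≤ ENNReal.ofReal (M * (∫ x, ‖x‖ ^ 3 ∂ν) * ‖β₁ - β₂‖) := by
    rw [Measure.lintegral_compProd hf]
    calc (∫⁻ x, ∫⁻ y, ENNReal.ofReal (‖x‖ ^ 2 *
          |(if y ≤ ⟪x, β₁⟫ then (1 : ℝ) else 0) - (if y ≤ ⟪x, β₂⟫ then (1 : ℝ) else 0)|)
            ∂(κ x) ∂ν)
        ≤ ∫⁻ x, ENNReal.ofReal (M * ‖x‖ ^ 3 * ‖β₁ - β₂‖) ∂ν := lintegral_mono key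
      _ = ENNReal.ofReal (∫ x, M * ‖x‖ ^ 3 * ‖β₁ - β₂‖ ∂ν) := by
          rw [← ofReal_integral_eq_lintegral_ofReal]
          · exact (hν3.const_mul M).mul_const _
          · exact Filter.Eventually.of_forall fun x => by positivity
      _ = ENNReal.ofReal (M * (∫ x, ‖x‖ ^ 3 ∂ν) * ‖β₁ - β₂‖) := by
          rw [integral_mul_const, integral_const_mul]
  refine ⟨hmain, ?_⟩
  -- the two integrands coincide pointwise
  have hpt : ∀ z : EuclideanSpace ℝ (Fin d) × ℝ,
      ‖((if z.2 ≤ ⟪z.1, β₁⟫ then (1 : ℝ) else 0) - τ) • z.1 -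
        ((if z.2 ≤ ⟪z.1, β₂⟫ then (1 : ℝ) else 0) - τ) • z.1‖ ^ 2
      = ‖z.1‖ ^ 2 *
        |(if z.2 ≤ ⟪z.1, β₁⟫ then (1 : ℝ) else 0) -
         (if z.2 ≤ ⟪z.1, β₂⟫ then (1 : ℝ) else 0)| := by
    intro z
    set a := (if z.2 ≤ ⟪z.1, β₁⟫ then (1 : ℝ) else 0) with ha
    set b := (if z.2 ≤ ⟪z.1, β₂⟫ then (1 : ℝ) else 0) with hb
    rw [← sub_smul]
    have h1 : (a - τ) - (b - τ) = a - b := by ring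
    rw [h1, norm_smul, mul_pow, Real.norm_eq_abs]
    have hab : |a - b| ^ 2 = |a - b| := by
      rw [ha, hb]; split_ifs <;> norm_num
    rw [hab]; ring
  have : (∫⁻ z : EuclideanSpace ℝ (Fin d) × ℝ,
      ENNReal.ofReal (‖((if z.2 ≤ ⟪z.1, β₁⟫ then (1 : ℝ) else 0) - τ) • z.1 -
        ((if z.2 ≤ ⟪z.1, β₂⟫ then (1 : ℝ) else 0) - τ) • z.1‖ ^ 2) ∂(ν.compProd κ))
      = (∫⁻ z : EuclideanSpace ℝ (Fin d) × ℝ,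
      ENNReal.ofReal (‖z.1‖ ^ 2 *
        |(if z.2 ≤ ⟪z.1, β₁⟫ then (1 : ℝ) else 0) -
         (if z.2 ≤ ⟪z.1, β₂⟫ then (1 : ℝ) else 0)|) ∂(ν.compProd κ)) :=
    lintegral_congr fun z => by rw [hpt z]
  rw [this]
  exact hmain
end
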